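/- Let X be a set, A = FreeAlgebra ℚ X, and let Lie(X) ⊆ A be the Lie subalgebra (under the commutator bracket [a,b] = ab − ba) generated by the letters of X, i.e. the free Lie algebra on X inside A. Let f : X → A be a map with f(y) lying in the ℚ-linear span of X for every y ∈ X, and let δ : A → A be the unique derivation of A extending f. Let D_δ : A → A be the ℚ-linear map defined on words by D_δ(y₁⋯yₙ) := [⋯[[δ(y₁), y₂], y₃]⋯, yₙ] for letters y_i ∈ X (and D_δ(1) = 0). Then: (1) D_δ maps A into Lie(X); and (2) for every l ∈ Lie(X), D_δ(l) = δ(l). -/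

import Mathlib

attribute [local instance 100] LieRing.ofAssociativeRing

/-- Let `A = FreeAlgebra ℚ X`, `Lie(X)` the Lie subalgebra (for the commutator
bracket) generated by the letters, `f : X → A` with values in the span of the letters,
`δ` the unique derivation of `A` extending `f`, and `D_δ` the linear map given on words by
`D_δ(y₁⋯yₙ) = [⋯[[δ(y₁), y₂], y₃]⋯, yₙ]` (with `D_δ(1) = 0`).  Then `D_δ` maps `A` into
`Lie(X)` and `D_δ(l) = δ(l)` for every `l ∈ Lie(X)`. -/
theorem statement1 (X : Type)
    (LieX : LieSubalgebra ℚ (FreeAlgebra ℚ X))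
    (hLieX : LieX = LieSubalgebra.lieSpan ℚ (FreeAlgebra ℚ X)
      (Set.range (FreeAlgebra.ι ℚ : X → FreeAlgebra ℚ X)))
    (f : X → FreeAlgebra ℚ X)
    (hf : ∀ x : X, f x ∈ Submodule.span ℚ
      (Set.range (FreeAlgebra.ι ℚ : X → FreeAlgebra ℚ X)))
    (δ : FreeAlgebra ℚ X →ₗ[ℚ] FreeAlgebra ℚ X)
    (hδ : ∀ a b : FreeAlgebra ℚ X, δ (a * b) = δ a * b + a * δ b)
    (hδf : ∀ x : X, δ (FreeAlgebra.ι ℚ x) = f x)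
    (Dδ : FreeAlgebra ℚ X →ₗ[ℚ] FreeAlgebra ℚ X)
    (hD1 : Dδ 1 = 0)
    (hDword : ∀ (n : ℕ) (y : Fin (n + 1) → X),
      Dδ (List.ofFn fun i => FreeAlgebra.ι ℚ (y i)).prod =
        (((List.ofFn y).tail).map fun z => FreeAlgebra.ι ℚ z).foldl
          (fun a b => a * b - b * a) (δ (FreeAlgebra.ι ℚ (y 0)))) :
    (∀ a : FreeAlgebra ℚ X, Dδ a ∈ LieX) ∧ (∀ l ∈ LieX, Dδ l = δ l) := by
  subst hLieX
  set ιX : X → FreeAlgebra ℚ X := FreeAlgebra.ι ℚ with hι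
  set LieX := LieSubalgebra.lieSpan ℚ (FreeAlgebra ℚ X) (Set.range ιX) with hL
  -- letters are in LieX
  have hlet : ∀ x : X, ιX x ∈ LieX := fun x =>
    LieSubalgebra.subset_lieSpan (Set.mem_range_self x)
  -- span of letters is in LieX
  have hsp : ∀ a : FreeAlgebra ℚ X,
      a ∈ Submodule.span ℚ (Set.range ιX) → a ∈ LieX := by
    intro a ha
    have : Submodule.span ℚ (Set.range ιX) ≤ LieX.toSubmodule :=
      Submodule.span_le.mpr (fun y hy => LieSubalgebra.subset_lieSpan hy)
    exact this ha
  have hδlet : ∀ x : X, δ (ιX x) ∈ LieX := by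
    intro x; rw [hδf]; exact hsp _ (hf x)
  -- word formula in list form
  have hDw : ∀ (z : X) (zs : List X),
      Dδ (((z :: zs).map ιX).prod)
        = (zs.map ιX).foldl (fun a b => a * b - b * a) (δ (ιX z)) := by
    intro z zs
    have h := hDword zs.length ((z :: zs).get)
    have e1 : (List.ofFn fun i : Fin (zs.length + 1) => ιX ((z :: zs).get i))
        = (z :: zs).map ιX := by
      apply List.ext_getElem <;> simp
    have e2 : (List.ofFn fun i : Fin (zs.length + 1) => (z :: zs).get i)
        = z :: zs := by
      apply List.ext_getElem <;> simp
    calc Dδ (((z :: zs).map ιX).prod)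
        = Dδ ((List.ofFn fun i : Fin (zs.length + 1) => ιX ((z :: zs).get i)).prod) := by
          rw [e1]
      _ = ((List.ofFn fun i : Fin (zs.length + 1) => (z :: zs).get i).tail.map
            fun w => ιX w).foldl (fun a b => a * b - b * a)
            (δ (ιX ((z :: zs).get (0 : Fin (zs.length + 1))))) := h
      _ = (zs.map ιX).foldl (fun a b => a * b - b * a) (δ (ιX z)) := by
          rw [e2]; rfl
  -- Dδ of a single letter
  have hDlet : ∀ x : X, Dδ (ιX x) = δ (ιX x) := by
    intro x
    have h := hDw x []
    simpa using h
  -- every element is in the span of words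
  have hspan : ∀ a : FreeAlgebra ℚ X, a ∈ Submodule.span ℚ
      {x : FreeAlgebra ℚ X | ∃ l : List X, (l.map ιX).prod = x} := by
    intro a
    have h1 : a ∈ Subalgebra.toSubmodule (Algebra.adjoin ℚ (Set.range ιX)) := by
      rw [FreeAlgebra.adjoin_range_ι]; trivial
    rw [Algebra.adjoin_eq_span] at h1
    refine Submodule.span_le.mpr ?_ h1
    intro x hx
    obtain ⟨L, hL, hLprod⟩ := Submonoid.exists_list_of_mem_closure hx
    have : ∀ L : List (FreeAlgebra ℚ X), (∀ y ∈ L, y ∈ Set.range ιX) →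
        ∃ l : List X, (l.map ιX).prod = L.prod := by
      intro L
      induction L with
      | nil => exact fun _ => ⟨[], by simp⟩
      | cons b L ih =>
        intro hb
        obtain ⟨x₀, hx₀⟩ := hb b (by simp)
        obtain ⟨l, hl⟩ := ih (fun y hy => hb y (by simp [hy]))
        exact ⟨x₀ :: l, by simp [hx₀, hl]⟩
    obtain ⟨l, hl⟩ := this L hL
    exact Submodule.subset_span ⟨l, by rw [hl, hLprod]⟩
  -- foldl of brackets stays in LieX
  have hfold : ∀ (zs : List X) (s : FreeAlgebra ℚ X), s ∈ LieX →
      (zs.map ιX).foldl (fun a b => a * b - b * a) s ∈ LieX := by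
    intro zs
    induction zs with
    | nil => intro s hs; simpa using hs
    | cons z zs ih =>
      intro s hs
      simp only [List.map_cons, List.foldl_cons]
      refine ih _ ?_
      have : s * ιX z - ιX z * s = ⁅s, ιX z⁆ := (Ring.lie_def _ _).symm
      rw [this]
      exact LieX.lie_mem hs (hlet z)
  -- Part 1
  have part1 : ∀ a : FreeAlgebra ℚ X, Dδ a ∈ LieX := by
    intro a
    refine Submodule.span_induction (p := fun x _ => Dδ x ∈ LieX)
      ?_ ?_ ?_ ?_ (hspan a)
    · rintro x ⟨l, rfl⟩
      cases l with
      | nil => simpa using (hD1 ▸ LieX.zero_mem : Dδ 1 ∈ LieX)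
      | cons z zs => rw [hDw]; exact hfold zs _ (hδlet z)
    · simp only [map_zero]; exact LieX.zero_mem
    · intro x y _ _ hx hy; rw [map_add]; exact LieX.add_mem hx hy
    · intro r x _ hx; rw [map_smul]; exact LieX.smul_mem r hx
  -- augmentation
  set ε : FreeAlgebra ℚ X →ₐ[ℚ] ℚ := FreeAlgebra.lift ℚ (fun _ => (0 : ℚ)) with hε
  have hειX : ∀ x : X, ε (ιX x) = 0 := by
    intro x; simp [hε, hι]
  -- L1 : product with a letter
  have hL1 : ∀ (x : X) (a : FreeAlgebra ℚ X),
      Dδ (a * ιX x) = ⁅Dδ a, ιX x⁆ + ε a • δ (ιX x) := by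
    intro x a
    refine Submodule.span_induction
      (p := fun a _ => Dδ (a * ιX x) = ⁅Dδ a, ιX x⁆ + ε a • δ (ιX x))
      ?_ ?_ ?_ ?_ (hspan a)
    · rintro b ⟨l, rfl⟩
      cases l with
      | nil =>
        simp only [List.map_nil, List.prod_nil, one_mul, hD1, zero_lie, map_one,
          one_smul, zero_add]
        exact hDlet x
      | cons z zs =>
        have h1 : ((z :: zs).map ιX).prod * ιX x = ((z :: (zs ++ [x])).map ιX).prod := by
          simp [mul_assoc]
        have h2 : ε (((z :: zs).map ιX).prod) = 0 := by
          rw [map_list_prod]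
          simp [hειX]
        rw [h1, hDw, h2, zero_smul, add_zero, List.map_append, List.foldl_append,
          ← hDw, Ring.lie_def]
        simp [mul_assoc]
    · simp
    · intro a b _ _ ha hb
      simp only [add_mul, map_add, ha, hb, add_lie, add_smul]
      abel
    · intro r a _ ha
      simp only [smul_mul_assoc, map_smul, ha, smul_add, smul_lie, map_smul,
        smul_eq_mul, mul_smul]
  -- key lemma by Lie-span induction
  have key : ∀ l ∈ LieX, ε l = 0 ∧
      ∀ a : FreeAlgebra ℚ X, Dδ (a * l) = ⁅Dδ a, l⁆ + ε a • δ l := by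
    intro l hl
    refine LieSubalgebra.lieSpan_induction (R := ℚ) (L := FreeAlgebra ℚ X)
      (s := Set.range ιX)
      (p := fun l _ => ε l = 0 ∧
        ∀ a : FreeAlgebra ℚ X, Dδ (a * l) = ⁅Dδ a, l⁆ + ε a • δ l)
      (hx := hl) (mem := ?_) (zero := ?_) (smul := ?_) (add := ?_) (lie := ?_)
    · rintro x ⟨x₀, rfl⟩
      exact ⟨hειX x₀, fun a => hL1 x₀ a⟩
    · refine ⟨map_zero ε, fun a => ?_⟩
      simp
    · intro x y _ _ hx hy
      refine ⟨by rw [map_add, hx.1, hy.1, add_zero], fun a => ?_⟩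
      rw [mul_add, map_add, hx.2 a, hy.2 a, lie_add, map_add, smul_add]
      abel
    · intro r x _ hx
      refine ⟨by rw [map_smul, hx.1, smul_zero], fun a => ?_⟩
      rw [mul_smul_comm, map_smul, hx.2 a, map_smul, smul_add, lie_smul, smul_comm]
    · intro x y _ _ hx hy
      have hεxy : ε ⁅x, y⁆ = 0 := by
        rw [Ring.lie_def, map_sub, map_mul, map_mul, hx.1, hy.1]
        ring
      refine ⟨hεxy, fun a => ?_⟩
      have hδxy : δ ⁅x, y⁆ = ⁅δ x, y⁆ - ⁅δ y, x⁆ := by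
        rw [Ring.lie_def, map_sub, hδ, hδ, Ring.lie_def, Ring.lie_def]
        abel
      calc Dδ (a * ⁅x, y⁆) = Dδ (a * x * y) - Dδ (a * y * x) := by
            rw [Ring.lie_def, mul_sub, map_sub, mul_assoc, mul_assoc]
        _ = (⁅Dδ (a * x), y⁆ + ε (a * x) • δ y) - (⁅Dδ (a * y), x⁆ + ε (a * y) • δ x) := by
            rw [hy.2 (a * x), hx.2 (a * y)]
        _ = ⁅Dδ (a * x), y⁆ - ⁅Dδ (a * y), x⁆ := by
            rw [map_mul ε a x, map_mul ε a y, hx.1, hy.1]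
            simp
        _ = ⁅⁅Dδ a, x⁆ + ε a • δ x, y⁆ - ⁅⁅Dδ a, y⁆ + ε a • δ y, x⁆ := by
            rw [hx.2 a, hy.2 a]
        _ = ⁅Dδ a, ⁅x, y⁆⁆ + ε a • δ ⁅x, y⁆ := by
            rw [add_lie, add_lie, smul_lie, smul_lie, hδxy, smul_sub, lie_lie,
              ← lie_skew x ⁅Dδ a, y⁆]
            abel
  refine ⟨part1, fun l hl => ?_⟩
  have h := (key l hl).2 1
  rw [one_mul, hD1, zero_lie, map_one, one_smul, zero_add] at h
  exact h
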